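/- arXiv:2108.00234 — 6 statements merged into one kernel-verified Lean document; each statement's English description precedes it below -/
import Mathlib

section
/- For every u > 0 and r ∈ ℝ, the function M satisfies the partial differential equation −∂_u M(u,r) + a(b−r)·∂_r M(u,r) + (δ²/2)·∂_{rr} M(u,r) − r·M(u,r) = 0. -/
open Real

/-- The function `M(u,r)` from the paper:
`M(u,r) = exp(−b̃u + ((b̃−r)/a)(1−e^{−au}) − (δ²/(4a³))(1−e^{−au})²)`
where `b̃ = b − δ²/(2a²)`. -/
noncomputable def M (a δ b u r : ℝ) : ℝ :=
  Real.exp (-(b - δ^2/(2*a^2))*u + ((b - δ^2/(2*a^2)) - r)/a * (1 - Real.exp (-(a*u)))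
    - δ^2/(4*a^3) * (1 - Real.exp (-(a*u)))^2)

lemma hasDerivAt_M_r (a δ b u r : ℝ) :
    HasDerivAt (fun r' => M a δ b u r')
      (-(1 - Real.exp (-(a*u)))/a * M a δ b u r) r := by
  have h1 : HasDerivAt (fun r' : ℝ => ((b - δ^2/(2*a^2)) - r')/a * (1 - Real.exp (-(a*u))))
      (((0 - 1)/a) * (1 - Real.exp (-(a*u)))) r :=
    (((hasDerivAt_const r (b - δ^2/(2*a^2))).sub (hasDerivAt_id r)).div_const a).mul_const _
  have hg := ((hasDerivAt_const r (-(b - δ^2/(2*a^2))*u)).add h1).sub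
      (hasDerivAt_const r (δ^2/(4*a^3) * (1 - Real.exp (-(a*u)))^2))
  have key := hg.exp
  have : HasDerivAt (fun r' => M a δ b u r')
      (Real.exp (-(b - δ^2/(2*a^2))*u + ((b - δ^2/(2*a^2)) - r)/a * (1 - Real.exp (-(a*u)))
        - δ^2/(4*a^3) * (1 - Real.exp (-(a*u)))^2)
        * (0 + (0 - 1)/a * (1 - Real.exp (-(a*u))) - 0)) r := key
  convert this using 1
  simp only [M]
  ring

lemma hasDerivAt_M_u (a δ b u r : ℝ) :
    HasDerivAt (fun u' => M a δ b u' r)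
      ((-(b - δ^2/(2*a^2)) + ((b - δ^2/(2*a^2)) - r)/a * (a * Real.exp (-(a*u)))
        - δ^2/(4*a^3) * (2 * (1 - Real.exp (-(a*u))) * (a * Real.exp (-(a*u)))))
        * M a δ b u r) u := by
  have hE' : HasDerivAt (fun u' : ℝ => Real.exp (-(a*u'))) (Real.exp (-(a*u)) * -(a*1)) u := by
    exact (((hasDerivAt_id u).const_mul a).neg).exp
  have h1 : HasDerivAt (fun u' : ℝ => -(b - δ^2/(2*a^2))*u') (-(b - δ^2/(2*a^2)) * 1) u :=
    (hasDerivAt_id u).const_mul _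
  have h2 : HasDerivAt (fun u' : ℝ => 1 - Real.exp (-(a*u')))
      (0 - Real.exp (-(a*u)) * -(a*1)) u := (hasDerivAt_const u (1:ℝ)).sub hE'
  have h3 := h2.const_mul (((b - δ^2/(2*a^2)) - r)/a)
  have h4 := (h2.fun_pow 2).const_mul (δ^2/(4*a^3))
  have hg := (h1.add h3).sub h4
  have key := hg.exp
  convert key using 1
  · rfl
  simp only [M, Pi.add_apply, Pi.sub_apply, Nat.cast_ofNat]
  ring

/-- `M` satisfies
`−∂_u M(u,r) + a(b−r)·∂_r M(u,r) + (δ²/2)·∂_{rr} M(u,r) − r·M(u,r) = 0`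
for every `u > 0`, `r ∈ ℝ`. -/
theorem M_solves_pde (a δ b : ℝ) (ha : 0 < a) (hδ : 0 < δ) :
    ∀ u > (0:ℝ), ∀ r : ℝ,
      -(deriv (fun u' => M a δ b u' r) u)
        + a*(b - r) * deriv (fun r' => M a δ b u r') r
        + δ^2/2 * deriv (deriv (fun r' => M a δ b u r')) r
        - r * M a δ b u r = 0 := by
  intro u hu r
  have ha' : a ≠ 0 := ne_of_gt ha
  set E := Real.exp (-(a*u)) with hE
  have hdu : deriv (fun u' => M a δ b u' r) u
      = (-(b - δ^2/(2*a^2)) + ((b - δ^2/(2*a^2)) - r)/a * (a * E)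
        - δ^2/(4*a^3) * (2 * (1 - E) * (a * E))) * M a δ b u r :=
    (hasDerivAt_M_u a δ b u r).deriv
  have hdr : (deriv (fun r' => M a δ b u r'))
      = fun r' => -(1 - E)/a * M a δ b u r' := by
    funext r'
    exact (hasDerivAt_M_r a δ b u r').deriv
  have hdrr : deriv (deriv (fun r' => M a δ b u r')) r
      = -(1 - E)/a * (-(1 - E)/a * M a δ b u r) := by
    rw [hdr]
    exact ((hasDerivAt_M_r a δ b u r).const_mul (-(1 - E)/a)).deriv
  rw [hdu, hdrr, hdr]
  field_simp
  ring
end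

section
/- Assume b̃ > 0. Then for every fixed r ≥ 0, the function u ↦ M(u,r) is strictly decreasing on [0,∞); in particular M(u,r) < M(0,r) = 1 for every u > 0. -/
open Real

/-- if `b̃ = b − δ²/(2a²) > 0`, then for every fixed `r ≥ 0` the map
`u ↦ M(u,r)` is strictly decreasing on `[0,∞)`; in particular
`M(u,r) < M(0,r) = 1` for every `u > 0`. -/
theorem M_strictAnti_in_u (a δ b : ℝ) (ha : 0 < a) (hδ : 0 < δ)
    (hb : 0 < b - δ^2/(2*a^2)) :
    ∀ r ≥ (0:ℝ),
      (∀ u₁ u₂ : ℝ, 0 ≤ u₁ → u₁ < u₂ → M a δ b u₂ r < M a δ b u₁ r) ∧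
      M a δ b 0 r = 1 ∧
      (∀ u > (0:ℝ), M a δ b u r < 1) := by
  intro r hr
  set c := b - δ^2/(2*a^2) with hc
  set f : ℝ → ℝ := fun u => -c*u + (c - r)/a * (1 - Real.exp (-(a*u)))
    - δ^2/(4*a^3) * (1 - Real.exp (-(a*u)))^2 with hf
  have hfanti : StrictAntiOn f (Set.Ici 0) := by
    apply strictAntiOn_of_deriv_neg (convex_Ici 0)
    · fun_prop
    · intro u hu
      rw [interior_Ici] at hu
      have hx1 : Real.exp (-(a*u)) < 1 := by
        rw [Real.exp_lt_one_iff]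
        nlinarith [mul_pos ha hu]
      have hx0 : 0 < Real.exp (-(a*u)) := Real.exp_pos _
      have hg : HasDerivAt (fun u => Real.exp (-(a*u))) (Real.exp (-(a*u)) * (-a)) u := by
        have h1 : HasDerivAt (fun u : ℝ => -(a*u)) (-a) u := by
          have := ((hasDerivAt_id u).const_mul a).neg; simp at this; exact this
        exact h1.exp
      have hd : HasDerivAt f
          (-c + (c - r)*Real.exp (-(a*u))
            - δ^2/(2*a^2) * (1 - Real.exp (-(a*u))) * Real.exp (-(a*u))) u := by
        have h1 : HasDerivAt (fun u : ℝ => -c*u) (-c) u := by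
          simpa using (hasDerivAt_id u).const_mul (-c)
        have h2 : HasDerivAt (fun u => (c - r)/a * (1 - Real.exp (-(a*u))))
            ((c - r)/a * (0 - Real.exp (-(a*u)) * (-a))) u :=
          ((hasDerivAt_const u (1:ℝ)).sub hg).const_mul _
        have h3 := (((hasDerivAt_const u (1:ℝ)).sub hg).pow 2).const_mul (δ^2/(4*a^3))
        have := (h1.add h2).sub h3
        convert this using 1
        · rfl
        · rfl
        · rfl
        simp only [Pi.sub_apply]
        push_cast
        field_simp
        ring
      rw [hd.deriv]
      have hD : (0:ℝ) < δ^2/(2*a^2) := by positivity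
      have h1x : 0 < 1 - Real.exp (-(a*u)) := by linarith
      have e : -c + (c - r)*Real.exp (-(a*u))
          - δ^2/(2*a^2) * (1 - Real.exp (-(a*u))) * Real.exp (-(a*u))
          = -(c*(1 - Real.exp (-(a*u)))) - r*Real.exp (-(a*u))
            - δ^2/(2*a^2) * ((1 - Real.exp (-(a*u))) * Real.exp (-(a*u))) := by ring
      rw [e]
      have := mul_pos hb h1x
      have := mul_nonneg hr hx0.le
      have := mul_pos hD (mul_pos h1x hx0)
      clear_value c f
      linarith
  have hanti : ∀ u₁ u₂ : ℝ, 0 ≤ u₁ → u₁ < u₂ → M a δ b u₂ r < M a δ b u₁ r := by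
    intro u₁ u₂ h1 h2
    have := hfanti h1 (le_trans h1 h2.le) h2
    have hM : ∀ u, M a δ b u r = Real.exp (f u) := fun u => rfl
    rw [hM, hM]
    exact Real.exp_lt_exp.2 this
  have h0 : M a δ b 0 r = 1 := by
    simp [M]
  exact ⟨hanti, h0, fun u hu => h0 ▸ hanti 0 u le_rfl hu⟩
end

section
/- For every t ∈ [0,T) and r ∈ ℝ with r ≠ α(t), the following limit holds: lim_{u→0⁺} ∫_{α(t+u)}^{∞} φ(z,u,r)·(1 − M(T−t−u, z)) dz = 1 − M(T−t, r) if r > α(t), and the limit equals 0 if r < α(t). -/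
open Real Filter MeasureTheory

/-- The separating curve `α(t)`. -/
noncomputable def alphaCurve (a δ b T t : ℝ) : ℝ :=
  (b - δ^2/(2*a^2)) * (1 - a*(T - t)/(1 - Real.exp (-(a*(T - t)))))
    - δ^2/(4*a^2) * (1 - Real.exp (-(a*(T - t))))

/-- The Gaussian kernel `φ(z,u,r)`. -/
noncomputable def phiKer (a δ b z u r : ℝ) : ℝ :=
  (Real.sqrt (2*Real.pi*(δ^2/(2*a))*(1 - Real.exp (-(2*a*u)))))⁻¹ *
    Real.exp (-(z - r*Real.exp (-(a*u)) - b*(1 - Real.exp (-(a*u)))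
      + δ^2/(2*a^2)*(1 - Real.exp (-(a*u)))^2)^2
      / (2*(δ^2/(2*a))*(1 - Real.exp (-(2*a*u)))))

/- ### Auxiliary definitions -/

noncomputable def gaussD (x : ℝ) : ℝ := (Real.sqrt (2*Real.pi))⁻¹ * Real.exp (-x^2/2)

noncomputable def mFun (a δ b r u : ℝ) : ℝ :=
  r*Real.exp (-(a*u)) + b*(1-Real.exp (-(a*u))) - δ^2/(2*a^2)*(1-Real.exp (-(a*u)))^2

noncomputable def sFun (a δ u : ℝ) : ℝ := δ^2/(2*a)*(1-Real.exp (-(2*a*u)))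

noncomputable def AFun (a δ b v : ℝ) : ℝ :=
  -(b - δ^2/(2*a^2))*v + (b - δ^2/(2*a^2))/a*(1 - Real.exp (-(a*v)))
    - δ^2/(4*a^3)*(1 - Real.exp (-(a*v)))^2

noncomputable def BFun (a v : ℝ) : ℝ := -(1 - Real.exp (-(a*v)))/a

/- ### Basic identities -/

lemma M_eq (a δ b v z : ℝ) : M a δ b v z = Real.exp (AFun a δ b v + BFun a v * z) := by
  unfold M AFun BFun; congr 1; ring

lemma gaussD_pos (x : ℝ) : 0 < gaussD x := by
  unfold gaussD
  have : 0 < Real.sqrt (2*Real.pi) := Real.sqrt_pos.mpr (by positivity)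
  positivity

lemma phi_eq (a δ b z u r : ℝ) :
    phiKer a δ b z u r = (Real.sqrt (2*Real.pi*sFun a δ u))⁻¹ *
      Real.exp (-(z - mFun a δ b r u)^2/(2*sFun a δ u)) := by
  unfold phiKer sFun mFun
  congr 2
  · ring
  · ring

lemma kernel_id {a δ u : ℝ} (b r x : ℝ) (hs : 0 < sFun a δ u) :
    Real.sqrt (sFun a δ u) *
      phiKer a δ b (mFun a δ b r u + Real.sqrt (sFun a δ u) * x) u r = gaussD x := by
  set s := sFun a δ u with hsdef
  set σ := Real.sqrt s with hσdef
  have hσpos : 0 < σ := Real.sqrt_pos.mpr hs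
  have hσsq : σ^2 = s := Real.sq_sqrt hs.le
  rw [phi_eq]
  have h1 : Real.sqrt (2*Real.pi*s) = Real.sqrt (2*Real.pi) * σ := by
    rw [hσdef, ← Real.sqrt_mul (by positivity)]
  have h2 : (mFun a δ b r u + σ * x - mFun a δ b r u)^2 = s * x^2 := by
    rw [← hσsq]; ring
  rw [h1, h2, mul_inv]
  have h3 : -(s * x^2) / (2*s) = -x^2/2 := by
    field_simp
  rw [h3]
  unfold gaussD
  field_simp

/- ### Integrability -/

lemma integrable_gaussD_exp (c : ℝ) : Integrable (fun x => gaussD x * Real.exp (c*x)) := by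
  have h0 : Integrable (fun x : ℝ => Real.exp (-(1/2 : ℝ) * x^2)) :=
    integrable_exp_neg_mul_sq (by norm_num)
  have h1 : Integrable (fun x : ℝ => Real.exp (-(1/2 : ℝ) * (x - c)^2)) :=
    h0.comp_sub_right c
  have h2 := (h1.const_mul ((Real.sqrt (2*Real.pi))⁻¹ * Real.exp (c^2/2)))
  refine h2.congr (Filter.Eventually.of_forall fun x => ?_)
  unfold gaussD
  simp only
  rw [mul_assoc, ← Real.exp_add, mul_assoc, ← Real.exp_add]
  congr 2
  ring

lemma integrable_gaussD : Integrable gaussD := by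
  have := integrable_gaussD_exp 0
  simpa using this

lemma integral_gaussD : ∫ x, gaussD x = 1 := by
  unfold gaussD
  rw [MeasureTheory.integral_const_mul]
  have : ∀ x : ℝ, -x^2/2 = -(1/2 : ℝ)*x^2 := fun x => by ring
  simp_rw [this, integral_gaussian]
  have h2 : Real.pi / (1/2 : ℝ) = 2 * Real.pi := by ring
  rw [h2, inv_mul_cancel₀ (by positivity)]

/- ### Change of variables -/

lemma integral_Ioi_comp_add_right (g : ℝ → ℝ) (c d : ℝ) :
    ∫ x in Set.Ioi c, g (x + d) = ∫ y in Set.Ioi (c + d), g y := by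
  rw [← integral_indicator measurableSet_Ioi, ← integral_indicator measurableSet_Ioi]
  rw [← integral_add_right_eq_self (Set.indicator (Set.Ioi (c + d)) g) d]
  congr 1
  ext x
  by_cases hx : x ∈ Set.Ioi c
  · rw [Set.indicator_of_mem hx,
      Set.indicator_of_mem (show x + d ∈ Set.Ioi (c + d) from by simpa using hx)]
  · rw [Set.indicator_of_notMem hx, Set.indicator_of_notMem]
    simp only [Set.mem_Ioi, not_lt] at hx ⊢
    linarith

lemma integral_Ioi_affine (f : ℝ → ℝ) (c' m σ : ℝ) (hσ : 0 < σ) :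
    ∫ z in Set.Ioi c', f z = σ * ∫ x in Set.Ioi ((c' - m)/σ), f (m + σ * x) := by
  have h1 : ∀ x : ℝ, f (m + σ * x) = (fun y => f (y + m)) (σ * x) := fun x => by
    simp [add_comm]
  simp_rw [h1]
  rw [MeasureTheory.integral_comp_mul_left_Ioi (fun y => f (y + m)) _ hσ]
  rw [integral_Ioi_comp_add_right f _ m]
  have h2 : σ * ((c' - m)/σ) + m = c' := by field_simp; ring
  rw [h2, smul_eq_mul, ← mul_assoc, mul_inv_cancel₀ hσ.ne', one_mul]

lemma sFun_pos {a δ u : ℝ} (ha : 0 < a) (hδ : 0 < δ) (hu : 0 < u) : 0 < sFun a δ u := by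
  unfold sFun
  have h1 : Real.exp (-(2*a*u)) < 1 := by
    rw [Real.exp_lt_one_iff]; nlinarith
  have h2 : 0 < δ^2/(2*a) := by positivity
  nlinarith

/-- Change of variables for the key integral. -/
lemma cov_eq (a δ b r v : ℝ) (ha : 0 < a) (hδ : 0 < δ) {u : ℝ} (hu : 0 < u) (c' : ℝ) :
    ∫ z in Set.Ioi c', phiKer a δ b z u r * (1 - M a δ b v z)
      = ∫ x in Set.Ioi ((c' - mFun a δ b r u)/Real.sqrt (sFun a δ u)),
          gaussD x * (1 - Real.exp (AFun a δ b v
            + BFun a v * (mFun a δ b r u + Real.sqrt (sFun a δ u) * x))) := by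
  have hs : 0 < sFun a δ u := sFun_pos ha hδ hu
  have hσ : 0 < Real.sqrt (sFun a δ u) := Real.sqrt_pos.mpr hs
  rw [integral_Ioi_affine (fun z => phiKer a δ b z u r * (1 - M a δ b v z)) c'
    (mFun a δ b r u) (Real.sqrt (sFun a δ u)) hσ, ← MeasureTheory.integral_const_mul]
  congr 1
  ext x
  rw [M_eq, ← mul_assoc, kernel_id b r x hs]
/- ### Continuity facts -/

lemma continuousAt_alpha (a δ b T t : ℝ) (ha : 0 < a) (htT : t < T) :
    ContinuousAt (alphaCurve a δ b T) t := by
  have hne : ∀ s : ℝ, s < T → 1 - Real.exp (-(a*(T - s))) ≠ 0 := by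
    intro s hs
    have : Real.exp (-(a*(T - s))) < 1 := by
      rw [Real.exp_lt_one_iff]; nlinarith
    linarith
  unfold alphaCurve
  apply ContinuousAt.sub
  · apply ContinuousAt.mul continuousAt_const
    apply ContinuousAt.sub continuousAt_const
    apply ContinuousAt.div
    · fun_prop
    · fun_prop
    · exact hne t htT
  · fun_prop

lemma mFun_zero (a δ b r : ℝ) : mFun a δ b r 0 = r := by
  simp [mFun]

lemma sFun_zero (a δ : ℝ) : sFun a δ 0 = 0 := by
  simp [sFun]

lemma tendsto_m (a δ b r : ℝ) :
    Filter.Tendsto (fun u => mFun a δ b r u) (nhdsWithin 0 (Set.Ioi 0)) (nhds r) := by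
  have h : ContinuousAt (mFun a δ b r) 0 := by unfold mFun; fun_prop
  have := h.tendsto.mono_left (nhdsWithin_le_nhds (s := Set.Ioi 0))
  rwa [mFun_zero] at this

lemma tendsto_sigma (a δ : ℝ) :
    Filter.Tendsto (fun u => Real.sqrt (sFun a δ u)) (nhdsWithin 0 (Set.Ioi 0)) (nhds 0) := by
  have h : ContinuousAt (fun u => Real.sqrt (sFun a δ u)) 0 := by
    unfold sFun; fun_prop
  have := h.tendsto.mono_left (nhdsWithin_le_nhds (s := Set.Ioi 0))
  simpa [sFun_zero] using this

lemma tendsto_sigma' (a δ : ℝ) (ha : 0 < a) (hδ : 0 < δ) :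
    Filter.Tendsto (fun u => Real.sqrt (sFun a δ u)) (nhdsWithin 0 (Set.Ioi 0))
      (nhdsWithin 0 (Set.Ioi 0)) := by
  rw [tendsto_nhdsWithin_iff]
  refine ⟨tendsto_sigma a δ, ?_⟩
  filter_upwards [self_mem_nhdsWithin] with u hu
  exact Set.mem_Ioi.mpr (Real.sqrt_pos.mpr (sFun_pos ha hδ hu))

/- ### Transformed integrand -/

noncomputable def Ffun (a δ b T t r u x : ℝ) : ℝ :=
  gaussD x * (1 - Real.exp (AFun a δ b (T - t - u)
    + BFun a (T - t - u) * (mFun a δ b r u + Real.sqrt (sFun a δ u) * x)))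

noncomputable def dfun (a δ b T t r u : ℝ) : ℝ :=
  (alphaCurve a δ b T (t + u) - mFun a δ b r u) / Real.sqrt (sFun a δ u)

lemma heq_lemma (a δ b T t r : ℝ) (ha : 0 < a) (hδ : 0 < δ) {u : ℝ} (hu : 0 < u) :
    (∫ z in Set.Ioi (alphaCurve a δ b T (t + u)),
        phiKer a δ b z u r * (1 - M a δ b (T - t - u) z))
      = ∫ x, Set.indicator (Set.Ioi (dfun a δ b T t r u)) (Ffun a δ b T t r u) x := by
  rw [cov_eq a δ b r (T - t - u) ha hδ hu (alphaCurve a δ b T (t + u)),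
    ← integral_indicator measurableSet_Ioi]
  unfold dfun Ffun
  rfl

lemma Ffun_cont (a δ b T t r u : ℝ) : Continuous (Ffun a δ b T t r u) := by
  unfold Ffun gaussD
  fun_prop

lemma Ffun_lim (a δ b T t r : ℝ) (x : ℝ) :
    Tendsto (fun u => Ffun a δ b T t r u x) (nhdsWithin 0 (Set.Ioi 0))
      (nhds (gaussD x * (1 - M a δ b (T - t) r))) := by
  rw [M_eq]
  have hc : ContinuousAt (fun u => Ffun a δ b T t r u x) 0 := by
    unfold Ffun AFun BFun mFun sFun
    fun_prop
  have h2 := hc.tendsto.mono_left (nhdsWithin_le_nhds (s := Set.Ioi 0))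
  have h3 : Ffun a δ b T t r 0 x
      = gaussD x * (1 - Real.exp (AFun a δ b (T - t) + BFun a (T - t) * r)) := by
    unfold Ffun
    simp only [sub_zero, mFun_zero, sFun_zero, Real.sqrt_zero, zero_mul, add_zero]
  rw [h3] at h2
  exact h2

/- ### Main theorem -/

/-- for `t ∈ [0,T)` and `r ≠ α(t)`,
`lim_{u→0⁺} ∫_{α(t+u)}^∞ φ(z,u,r)(1 − M(T−t−u,z)) dz`
equals `1 − M(T−t,r)` if `r > α(t)` and `0` if `r < α(t)`. -/
theorem phi_integral_limit (a δ b T : ℝ) (ha : 0 < a) (hδ : 0 < δ) (hT : 0 < T) :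
    ∀ t : ℝ, 0 ≤ t → t < T → ∀ r : ℝ, r ≠ alphaCurve a δ b T t →
      (alphaCurve a δ b T t < r →
        Tendsto (fun u => ∫ z in Set.Ioi (alphaCurve a δ b T (t + u)),
            phiKer a δ b z u r * (1 - M a δ b (T - t - u) z))
          (nhdsWithin 0 (Set.Ioi 0)) (nhds (1 - M a δ b (T - t) r))) ∧
      (r < alphaCurve a δ b T t →
        Tendsto (fun u => ∫ z in Set.Ioi (alphaCurve a δ b T (t + u)),
            phiKer a δ b z u r * (1 - M a δ b (T - t - u) z))
          (nhdsWithin 0 (Set.Ioi 0)) (nhds 0)) := by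
  intro t ht htT r hr
  have heq : (fun u => ∫ z in Set.Ioi (alphaCurve a δ b T (t + u)),
        phiKer a δ b z u r * (1 - M a δ b (T - t - u) z))
      =ᶠ[nhdsWithin (0:ℝ) (Set.Ioi 0)]
      (fun u => ∫ x, Set.indicator (Set.Ioi (dfun a δ b T t r u)) (Ffun a δ b T t r u) x) := by
    filter_upwards [self_mem_nhdsWithin] with u hu
    exact heq_lemma a δ b T t r ha hδ hu
  -- limits of the ingredients
  have halpha : Tendsto (fun u => alphaCurve a δ b T (t + u)) (nhdsWithin (0:ℝ) (Set.Ioi 0))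
      (nhds (alphaCurve a δ b T t)) := by
    have h1 : ContinuousAt (fun u : ℝ => alphaCurve a δ b T (t + u)) 0 := by
      have h2 : ContinuousAt (fun u : ℝ => t + u) 0 := by fun_prop
      have h4 : ContinuousAt (alphaCurve a δ b T) ((fun u : ℝ => t + u) 0) := by
        simpa using continuousAt_alpha a δ b T t ha htT
      exact h4.comp h2
    have := h1.tendsto.mono_left (nhdsWithin_le_nhds (s := Set.Ioi 0))
    simpa using this
  have hnum : Tendsto (fun u => alphaCurve a δ b T (t + u) - mFun a δ b r u)
      (nhdsWithin (0:ℝ) (Set.Ioi 0)) (nhds (alphaCurve a δ b T t - r)) :=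
    halpha.sub (tendsto_m a δ b r)
  have hinv : Tendsto (fun u => (Real.sqrt (sFun a δ u))⁻¹)
      (nhdsWithin (0:ℝ) (Set.Ioi 0)) atTop :=
    (tendsto_sigma' a δ ha hδ).inv_tendsto_nhdsGT_zero
  -- measurability
  have hmeas : ∀ u : ℝ, AEStronglyMeasurable
      (fun x => Set.indicator (Set.Ioi (dfun a δ b T t r u)) (Ffun a δ b T t r u) x)
      (volume : Measure ℝ) :=
    fun u => ((Ffun_cont a δ b T t r u).aestronglyMeasurable).indicator measurableSet_Ioi
  -- the dominating function
  obtain ⟨u1, hu1m, hC1⟩ := isCompact_Icc.exists_isMaxOn (Set.nonempty_Icc.mpr zero_le_one)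
    (Continuous.continuousOn (show
      Continuous (fun u : ℝ => AFun a δ b (T-t-u) + BFun a (T-t-u) * mFun a δ b r u) by
        unfold AFun BFun mFun; fun_prop))
  obtain ⟨u2, hu2m, hK⟩ := isCompact_Icc.exists_isMaxOn (Set.nonempty_Icc.mpr zero_le_one)
    (Continuous.continuousOn (show
      Continuous (fun u : ℝ => |BFun a (T-t-u)| * Real.sqrt (sFun a δ u)) by
        unfold BFun sFun; fun_prop))
  set C1 := AFun a δ b (T-t-u1) + BFun a (T-t-u1) * mFun a δ b r u1 with hC1def
  set K := |BFun a (T-t-u2)| * Real.sqrt (sFun a δ u2) with hKdef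
  have hK0 : 0 ≤ K := by rw [hKdef]; positivity
  have hbound_int : Integrable (fun x => gaussD x + Real.exp C1 *
      (gaussD x * Real.exp (K*x) + gaussD x * Real.exp ((-K)*x))) := by
    apply Integrable.add integrable_gaussD
    exact ((integrable_gaussD_exp K).add (integrable_gaussD_exp (-K))).const_mul _
  have hbd : ∀ᶠ u in nhdsWithin (0:ℝ) (Set.Ioi 0), ∀ᵐ x : ℝ,
      ‖Set.indicator (Set.Ioi (dfun a δ b T t r u)) (Ffun a δ b T t r u) x‖
        ≤ gaussD x + Real.exp C1 *
          (gaussD x * Real.exp (K*x) + gaussD x * Real.exp ((-K)*x)) := by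
    have hIoc : Set.Ioc (0:ℝ) 1 ∈ nhdsWithin (0:ℝ) (Set.Ioi 0) :=
      Ioc_mem_nhdsGT_of_mem (by constructor <;> norm_num)
    filter_upwards [hIoc] with u hu
    refine Filter.Eventually.of_forall fun x => ?_
    have h1 : ‖Set.indicator (Set.Ioi (dfun a δ b T t r u)) (Ffun a δ b T t r u) x‖
        ≤ ‖Ffun a δ b T t r u x‖ := norm_indicator_le_norm_self _ _
    refine h1.trans ?_
    have hgp := (gaussD_pos x).le
    have hFx : ‖Ffun a δ b T t r u x‖ = gaussD x * |1 - Real.exp (AFun a δ b (T-t-u)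
        + BFun a (T-t-u) * (mFun a δ b r u + Real.sqrt (sFun a δ u) * x))| := by
      unfold Ffun
      rw [Real.norm_eq_abs, abs_mul, abs_of_nonneg hgp]
    rw [hFx]
    set y := AFun a δ b (T-t-u) + BFun a (T-t-u) *
      (mFun a δ b r u + Real.sqrt (sFun a δ u) * x) with hy
    have hy_le : y ≤ C1 + K * |x| := by
      have hu' : u ∈ Set.Icc (0:ℝ) 1 := ⟨hu.1.le, hu.2⟩
      have e1 := hC1 hu'
      have e2 := hK hu'
      have hσnn : 0 ≤ Real.sqrt (sFun a δ u) := Real.sqrt_nonneg _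
      have e3 : BFun a (T-t-u) * (Real.sqrt (sFun a δ u) * x)
          ≤ |BFun a (T-t-u)| * Real.sqrt (sFun a δ u) * |x| := by
        calc BFun a (T-t-u) * (Real.sqrt (sFun a δ u) * x)
            ≤ |BFun a (T-t-u) * (Real.sqrt (sFun a δ u) * x)| := le_abs_self _
          _ = |BFun a (T-t-u)| * Real.sqrt (sFun a δ u) * |x| := by
              rw [abs_mul, abs_mul, abs_of_nonneg hσnn]; ring
      have e4 : |BFun a (T-t-u)| * Real.sqrt (sFun a δ u) * |x| ≤ K * |x| :=
        mul_le_mul_of_nonneg_right e2 (abs_nonneg x)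
      calc y = (AFun a δ b (T-t-u) + BFun a (T-t-u) * mFun a δ b r u)
            + BFun a (T-t-u) * (Real.sqrt (sFun a δ u) * x) := by rw [hy]; ring
        _ ≤ C1 + K * |x| := add_le_add e1 (e3.trans e4)
    have habs : |1 - Real.exp y| ≤ 1 + Real.exp (C1 + K * |x|) := by
      have h4 := Real.exp_pos y
      have h5 : Real.exp y ≤ Real.exp (C1 + K*|x|) := Real.exp_le_exp.mpr hy_le
      rw [abs_le]
      constructor <;> nlinarith [Real.exp_pos (C1 + K*|x|)]
    have hexpabs : Real.exp (K * |x|) ≤ Real.exp (K*x) + Real.exp ((-K)*x) := by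
      rcases le_or_gt 0 x with hx | hx
      · rw [abs_of_nonneg hx]
        have := Real.exp_pos ((-K)*x); linarith
      · rw [abs_of_neg hx]
        have h7 : K * -x = (-K)*x := by ring
        rw [h7]
        have := Real.exp_pos (K*x); linarith
    calc gaussD x * |1 - Real.exp y| ≤ gaussD x * (1 + Real.exp (C1 + K*|x|)) :=
          mul_le_mul_of_nonneg_left habs hgp
      _ = gaussD x + Real.exp C1 * (gaussD x * Real.exp (K*|x|)) := by
          rw [Real.exp_add]; ring
      _ ≤ _ := by
          have h6 : gaussD x * Real.exp (K*|x|)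
              ≤ gaussD x * Real.exp (K*x) + gaussD x * Real.exp ((-K)*x) := by
            rw [← mul_add]; exact mul_le_mul_of_nonneg_left hexpabs hgp
          have := (Real.exp_pos C1).le
          nlinarith
  refine ⟨fun hlt => ?_, fun hlt => ?_⟩
  · -- case r > alpha
    have hdlim : Tendsto (fun u => dfun a δ b T t r u) (nhdsWithin (0:ℝ) (Set.Ioi 0)) atBot := by
      have hneg : alphaCurve a δ b T t - r < 0 := by linarith
      have := Filter.Tendsto.neg_mul_atTop hneg hnum hinv
      refine this.congr fun u => ?_
      unfold dfun
      rw [div_eq_mul_inv]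
    have hlim : ∀ᵐ x : ℝ, Tendsto
        (fun u => Set.indicator (Set.Ioi (dfun a δ b T t r u)) (Ffun a δ b T t r u) x)
        (nhdsWithin (0:ℝ) (Set.Ioi 0)) (nhds (gaussD x * (1 - M a δ b (T-t) r))) := by
      refine Filter.Eventually.of_forall fun x => ?_
      have hev : ∀ᶠ u in nhdsWithin (0:ℝ) (Set.Ioi 0), dfun a δ b T t r u < x :=
        hdlim.eventually (eventually_lt_atBot x)
      refine (Ffun_lim a δ b T t r x).congr' ?_
      filter_upwards [hev] with u hu
      exact (Set.indicator_of_mem (Set.mem_Ioi.mpr hu) _).symm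
    have hDCT := tendsto_integral_filter_of_dominated_convergence _
      (Filter.Eventually.of_forall fun u => hmeas u) hbd hbound_int hlim
    have hval : ∫ x : ℝ, gaussD x * (1 - M a δ b (T-t) r) = 1 - M a δ b (T-t) r := by
      rw [MeasureTheory.integral_mul_const, integral_gaussD, one_mul]
    rw [hval] at hDCT
    exact Filter.Tendsto.congr' heq.symm hDCT
  · -- case r < alpha
    have hdlim : Tendsto (fun u => dfun a δ b T t r u) (nhdsWithin (0:ℝ) (Set.Ioi 0)) atTop := by
      have hpos : (0:ℝ) < alphaCurve a δ b T t - r := by linarith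
      have := Filter.Tendsto.pos_mul_atTop hpos hnum hinv
      refine this.congr fun u => ?_
      unfold dfun
      rw [div_eq_mul_inv]
    have hlim : ∀ᵐ x : ℝ, Tendsto
        (fun u => Set.indicator (Set.Ioi (dfun a δ b T t r u)) (Ffun a δ b T t r u) x)
        (nhdsWithin (0:ℝ) (Set.Ioi 0)) (nhds ((fun _ : ℝ => (0:ℝ)) x)) := by
      refine Filter.Eventually.of_forall fun x => ?_
      have hev : ∀ᶠ u in nhdsWithin (0:ℝ) (Set.Ioi 0), x < dfun a δ b T t r u :=
        hdlim.eventually (eventually_gt_atTop x)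
      refine Filter.Tendsto.congr' ?_ tendsto_const_nhds
      filter_upwards [hev] with u hu
      refine (Set.indicator_of_notMem ?_ _).symm
      simp only [Set.mem_Ioi, not_lt]
      linarith
    have hDCT := tendsto_integral_filter_of_dominated_convergence _
      (Filter.Eventually.of_forall fun u => hmeas u) hbd hbound_int hlim
    rw [MeasureTheory.integral_zero] at hDCT
    exact Filter.Tendsto.congr' heq.symm hDCT
end

section
/- Let μ > 0 and define f(t,r) = μ(T−t)·M(T−t,r) on [0,T] × ℝ. Then for every (t,r) ∈ (0,T) × ℝ, ∂_t f(t,r) + a(b−r)·∂_r f(t,r) + (δ²/2)·∂_{rr} f(t,r) − r·f(t,r) = −μ·M(T−t,r). Moreover f(T,r) = 0 for all r, for every t ∈ [0,T) one has lim_{r→∞} f(t,r) = 0 and lim_{r→−∞} f(t,r) = ∞, and f(t, α(t)) = μ(T−t) for every t ∈ [0,T). -/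
open Real Filter

lemma hasDerivAt_expAffine (c P Q : ℝ) (r : ℝ) :
    HasDerivAt (fun r' => c * Real.exp (P + Q * r')) (c * Real.exp (P + Q * r) * Q) r := by
  have h : HasDerivAt (fun r' : ℝ => P + Q * r') Q r := by
    simpa using ((hasDerivAt_id r).const_mul Q).const_add P
  simpa [mul_assoc] using h.exp.const_mul c

/-- with `f(t,r) = μ(T−t)M(T−t,r)`:
`∂_t f + a(b−r)∂_r f + (δ²/2)∂_{rr} f − rf = −μM(T−t,r)` on `(0,T) × ℝ`;
`f(T,r) = 0`; `lim_{r→∞} f(t,r) = 0` and `lim_{r→−∞} f(t,r) = ∞` for `t ∈ [0,T)`;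
and `f(t,α(t)) = μ(T−t)` for `t ∈ [0,T)`. -/
theorem muTM_properties (a δ b T μ : ℝ) (ha : 0 < a) (hδ : 0 < δ) (hT : 0 < T)
    (hμ : 0 < μ) :
    (∀ t : ℝ, 0 < t → t < T → ∀ r : ℝ,
      deriv (fun t' => μ*(T - t')*M a δ b (T - t') r) t
        + a*(b - r) * deriv (fun r' => μ*(T - t)*M a δ b (T - t) r') r
        + δ^2/2 * deriv (deriv (fun r' => μ*(T - t)*M a δ b (T - t) r')) r
        - r * (μ*(T - t)*M a δ b (T - t) r)
        = -(μ * M a δ b (T - t) r)) ∧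
    (∀ r : ℝ, μ*(T - T)*M a δ b (T - T) r = 0) ∧
    (∀ t : ℝ, 0 ≤ t → t < T →
      Tendsto (fun r => μ*(T - t)*M a δ b (T - t) r) atTop (nhds 0) ∧
      Tendsto (fun r => μ*(T - t)*M a δ b (T - t) r) atBot atTop) ∧
    (∀ t : ℝ, 0 ≤ t → t < T →
      μ*(T - t)*M a δ b (T - t) (alphaCurve a δ b T t) = μ*(T - t)) := by
  have ha' : a ≠ 0 := ha.ne'
  refine ⟨?_, ?_, ?_, ?_⟩
  · -- the PDE
    intro t ht htT r
    set bb : ℝ := b - δ^2/(2*a^2) with hbb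
    set E : ℝ := Real.exp (-(a*(T - t))) with hE
    set P : ℝ := -bb*(T - t) + bb/a * (1 - E) - δ^2/(4*a^3) * (1 - E)^2 with hP
    set Q : ℝ := -(1 - E)/a with hQ
    have hexp : ∀ r' : ℝ, M a δ b (T - t) r' = Real.exp (P + Q * r') := by
      intro r'
      unfold M
      rw [hP, hQ, hbb, hE]
      congr 1
      ring
    -- first r-derivative
    have hd1 : deriv (fun r' => μ*(T - t)*M a δ b (T - t) r') r
        = μ*(T - t) * Real.exp (P + Q * r) * Q := by
      simp only [mul_assoc, hexp]
      simpa [mul_assoc] using (hasDerivAt_expAffine (μ*(T - t)) P Q r).deriv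
    -- second r-derivative
    have hd2 : deriv (deriv (fun r' => μ*(T - t)*M a δ b (T - t) r')) r
        = μ*(T - t) * Real.exp (P + Q * r) * Q * Q := by
      have hfun : deriv (fun r' => μ*(T - t)*M a δ b (T - t) r')
          = fun r' => (μ*(T - t)*Q) * Real.exp (P + Q * r') := by
        funext r'
        simp only [mul_assoc, hexp]
        rw [show (fun r' => μ * ((T - t) * Real.exp (P + Q * r'))) =
            (fun r' => μ * (T - t) * Real.exp (P + Q * r')) by funext x; ring]
        rw [(hasDerivAt_expAffine (μ*(T - t)) P Q r').deriv]
        ring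
      rw [hfun, (hasDerivAt_expAffine (μ*(T - t)*Q) P Q r).deriv]
      ring
    -- t-derivative
    have h1 : HasDerivAt (fun t' : ℝ => T - t') (-1) t := by
      simpa using (hasDerivAt_id t).const_sub T
    have h2 : HasDerivAt (fun t' : ℝ => -(a*(T - t'))) a t := by
      simpa using ((h1.const_mul a).fun_neg)
    have h3 : HasDerivAt (fun t' : ℝ => Real.exp (-(a*(T - t')))) (E * a) t := by
      simpa [hE] using h2.exp
    have h4 : HasDerivAt (fun t' : ℝ => 1 - Real.exp (-(a*(T - t')))) (-(E * a)) t :=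
      h3.const_sub 1
    have hψ : HasDerivAt (fun t' : ℝ =>
        -bb*(T - t') + (bb - r)/a * (1 - Real.exp (-(a*(T - t'))))
          - δ^2/(4*a^3) * (1 - Real.exp (-(a*(T - t'))))^2)
        ((-bb) * (-1) + (bb - r)/a * (-(E * a))
          - δ^2/(4*a^3) * (((2:ℕ):ℝ) * (1 - E)^1 * (-(E * a)))) t :=
      ((h1.const_mul (-bb)).add (h4.const_mul ((bb - r)/a))).sub
        ((h4.pow 2).const_mul (δ^2/(4*a^3)))
    have hXeq : Real.exp (-bb*(T - t) + (bb - r)/a * (1 - E)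
        - δ^2/(4*a^3) * (1 - E)^2) = Real.exp (P + Q * r) := by
      rw [hP, hQ]
      congr 1
      ring
    have hfe : (fun t' => μ*(T - t')*M a δ b (T - t') r) = (fun t' : ℝ => μ*(T - t') *
        Real.exp (-bb*(T - t') + (bb - r)/a * (1 - Real.exp (-(a*(T - t'))))
          - δ^2/(4*a^3) * (1 - Real.exp (-(a*(T - t'))))^2)) := by
      funext t'
      unfold M
      rw [hbb]
    have hft : HasDerivAt (fun t' : ℝ => μ*(T - t') *
        Real.exp (-bb*(T - t') + (bb - r)/a * (1 - Real.exp (-(a*(T - t'))))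
          - δ^2/(4*a^3) * (1 - Real.exp (-(a*(T - t'))))^2))
        (μ * (-1) * Real.exp (P + Q * r) + μ*(T - t) * (Real.exp (P + Q * r) *
          ((-bb) * (-1) + (bb - r)/a * (-(E * a))
            - δ^2/(4*a^3) * (((2:ℕ):ℝ) * (1 - E)^1 * (-(E * a)))))) t := by
      rw [← hXeq]
      exact (h1.const_mul μ).mul hψ.exp
    rw [hfe, hft.deriv, hd1, hd2, hexp r, hbb, hQ]
    push_cast
    field_simp
    ring
  · intro r; simp
  · -- limits
    intro t ht htT
    have hu : 0 < T - t := by linarith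
    have hμu : 0 < μ * (T - t) := mul_pos hμ hu
    set E : ℝ := Real.exp (-(a*(T - t))) with hE
    have hE1 : E < 1 := by
      rw [hE]
      exact Real.exp_lt_one_iff.mpr (by nlinarith)
    set bb : ℝ := b - δ^2/(2*a^2) with hbb
    set P : ℝ := -bb*(T - t) + bb/a * (1 - E) - δ^2/(4*a^3) * (1 - E)^2 with hP
    set Q : ℝ := -(1 - E)/a with hQ
    have hQneg : Q < 0 := by
      rw [hQ]
      exact div_neg_of_neg_of_pos (by linarith) ha
    have hexp : ∀ r' : ℝ, M a δ b (T - t) r' = Real.exp (P + Q * r') := by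
      intro r'
      unfold M
      rw [hP, hQ, hbb, hE]
      congr 1
      ring
    have hfun : (fun r : ℝ => μ*(T - t)*M a δ b (T - t) r)
        = fun r => (μ*(T - t)) * Real.exp (P + Q * r) := by
      funext r'; rw [hexp r']
    constructor
    · rw [hfun]
      have h1 : Tendsto (fun r : ℝ => P + Q * r) atTop atBot :=
        tendsto_atBot_add_const_left _ P (tendsto_id.const_mul_atTop_of_neg hQneg)
      have h2 := (Real.tendsto_exp_atBot.comp h1).const_mul (μ*(T - t))
      simpa using h2
    · rw [hfun]
      have h1 : Tendsto (fun r : ℝ => P + Q * r) atBot atTop :=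
        tendsto_atTop_add_const_left _ P (tendsto_id.const_mul_atBot_of_neg hQneg)
      exact (Real.tendsto_exp_atTop.comp h1).const_mul_atTop hμu
  · -- value on the curve
    intro t ht htT
    have hu : 0 < T - t := by linarith
    have hE1 : Real.exp (-(a*(T - t))) < 1 :=
      Real.exp_lt_one_iff.mpr (by nlinarith)
    have h1E : 1 - Real.exp (-(a*(T - t))) ≠ 0 := by
      intro h; linarith [h]
    have hX : (-(b - δ^2/(2*a^2))*(T - t)
        + ((b - δ^2/(2*a^2)) - alphaCurve a δ b T t)/a * (1 - Real.exp (-(a*(T - t))))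
        - δ^2/(4*a^3) * (1 - Real.exp (-(a*(T - t))))^2) = 0 := by
      unfold alphaCurve
      field_simp
      ring
    unfold M
    rw [hX, Real.exp_zero, mul_one]
end

section
/- Fix μ > 0 and ξ > 0, and define G̃(t,r) = μ(T−t)·M(T−t,r) + ξ·γ(t,r) on [0,T) × ℝ. Then: (i) γ(t,r) ≥ 0 for all (t,r) ∈ [0,T) × ℝ; (ii) for every t ∈ [0,T), lim_{r→∞} G̃(t,r) = 0 and lim_{r→−∞} G̃(t,r) = ∞; (iii) for every r ∈ ℝ, lim_{t→T⁻} G̃(t,r) = 0. -/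
open Real Filter MeasureTheory intervalIntegral

/-- The function `γ(t,r) = ∫_0^{T−t} ∫_{α(u+t)}^∞ M(u,r)(1−M(T−u−t,z))φ(z,u,r) dz du`. -/
noncomputable def gammaFun (a δ b T t r : ℝ) : ℝ :=
  ∫ u in (0:ℝ)..(T - t), ∫ z in Set.Ioi (alphaCurve a δ b T (u + t)),
    M a δ b u r * (1 - M a δ b (T - u - t) z) * phiKer a δ b z u r

/-- The function `G̃(t,r) = μ(T−t)·M(T−t,r) + ξ·γ(t,r)`. -/
noncomputable def Gtilde (a δ b T μ ξ t r : ℝ) : ℝ :=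
  μ*(T - t)*M a δ b (T - t) r + ξ * gammaFun a δ b T t r

lemma M_pos (a δ b u r : ℝ) : 0 < M a δ b u r := Real.exp_pos _

lemma phi_nonneg (a δ b z u r : ℝ) : 0 ≤ phiKer a δ b z u r := by
  rw [phiKer]
  positivity

lemma M_le_one (a δ b T : ℝ) (ha : 0 < a) {s z : ℝ} (hs : s ≤ T)
    (hz : alphaCurve a δ b T s ≤ z) : M a δ b (T - s) z ≤ 1 := by
  rw [alphaCurve] at hz
  rw [M, Real.exp_le_one_iff]
  set B := b - δ^2/(2*a^2) with hB
  set u := T - s with hu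
  have hu0 : 0 ≤ u := by simp [hu]; linarith
  rcases eq_or_lt_of_le hu0 with h0 | h0
  · simp [← h0]
  · set c := 1 - Real.exp (-(a*u)) with hc
    have hau : 0 < a * u := mul_pos ha h0
    have hcpos : 0 < c := by
      rw [hc, sub_pos]
      exact Real.exp_lt_one_iff.mpr (by linarith)
    have h1 : (B*(1 - a*u/c) - δ^2/(4*a^2)*c) * c ≤ z * c :=
      mul_le_mul_of_nonneg_right hz hcpos.le
    have h1' : B*c - B*(a*u) - δ^2/(4*a^2)*c^2 ≤ z*c := by
      have he : (B*(1 - a*u/c) - δ^2/(4*a^2)*c) * c = B*c - B*(a*u) - δ^2/(4*a^2)*c^2 := by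
        field_simp
      linarith [he ▸ h1]
    have key : -B*u + (B - z)/a * c - δ^2/(4*a^3)*c^2
        = (B*c - z*c - δ^2/(4*a^2)*c^2 - B*(a*u))/a := by
      field_simp
      ring
    rw [key]
    apply div_nonpos_of_nonpos_of_nonneg _ ha.le
    linarith

lemma phi_eq_gaussian (a δ b u r : ℝ) (ha : 0 < a) (hδ : 0 < δ) (hu : 0 < u) :
    ∃ v : NNReal, v ≠ 0 ∧
      (fun z => phiKer a δ b z u r) = ProbabilityTheory.gaussianPDFReal
        (r*Real.exp (-(a*u)) + b*(1 - Real.exp (-(a*u)))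
          - δ^2/(2*a^2)*(1 - Real.exp (-(a*u)))^2) v := by
  have hv : (0:ℝ) < (δ^2/(2*a))*(1 - Real.exp (-(2*a*u))) := by
    have h1 : Real.exp (-(2*a*u)) < 1 := Real.exp_lt_one_iff.mpr (by nlinarith)
    have : (0:ℝ) < δ^2/(2*a) := by positivity
    nlinarith
  refine ⟨⟨_, hv.le⟩, ?_, ?_⟩
  · exact fun h => hv.ne' (congrArg NNReal.toReal h)
  · funext z
    rw [phiKer]
    erw [ProbabilityTheory.gaussianPDFReal_def]
    show _ = (√(2 * π * (δ^2/(2*a)*(1 - Real.exp (-(2*a*u))))))⁻¹ * Real.exp (-(z - _) ^ 2 / (2 * (δ^2/(2*a)*(1 - Real.exp (-(2*a*u))))))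
    congr 1
    · congr 2; ring
    · congr 1; ring

lemma continuous_M_z (a δ b w : ℝ) : Continuous (fun z => M a δ b w z) := by
  unfold M
  continuity

lemma continuous_phi_z (a δ b u r : ℝ) : Continuous (fun z => phiKer a δ b z u r) := by
  unfold phiKer
  continuity

lemma continuous_M_u (a δ b r : ℝ) : Continuous (fun u => M a δ b u r) := by
  unfold M
  continuity

/-- The inner integral is bounded in norm by `M a δ b u r`. -/
lemma inner_bound (a δ b T t u r : ℝ) (ha : 0 < a) (hδ : 0 < δ)
    (hu : 0 < u) (hut : u + t ≤ T) :
    ‖∫ z in Set.Ioi (alphaCurve a δ b T (u + t)),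
      M a δ b u r * (1 - M a δ b (T - u - t) z) * phiKer a δ b z u r‖
      ≤ M a δ b u r := by
  obtain ⟨v, hv0, hphi⟩ := phi_eq_gaussian a δ b u r ha hδ hu
  set m := r*Real.exp (-(a*u)) + b*(1 - Real.exp (-(a*u)))
      - δ^2/(2*a^2)*(1 - Real.exp (-(a*u)))^2 with hm
  set α := alphaCurve a δ b T (u + t) with hα
  set g := fun z => M a δ b u r * (1 - M a δ b (T - u - t) z) * phiKer a δ b z u r with hg
  have hgb : ∀ z ∈ Set.Ioi α, ‖g z‖ ≤ M a δ b u r * ProbabilityTheory.gaussianPDFReal m v z := by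
    intro z hz
    have h1 : M a δ b (T - u - t) z ≤ 1 := by
      have := M_le_one a δ b T ha (s := u + t) (by linarith) (le_of_lt hz)
      rwa [show T - (u + t) = T - u - t by ring] at this
    have h2 : 0 < M a δ b (T - u - t) z := M_pos _ _ _ _ _
    have hphiz : phiKer a δ b z u r = ProbabilityTheory.gaussianPDFReal m v z :=
      congrFun hphi z
    rw [hg]
    simp only [norm_mul, Real.norm_eq_abs]
    rw [abs_of_pos (M_pos a δ b u r), abs_of_nonneg (phi_nonneg a δ b z u r), hphiz]
    have habs : |1 - M a δ b (T - u - t) z| ≤ 1 := by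
      rw [abs_le]; constructor <;> linarith
    have hMφ : 0 ≤ M a δ b u r * ProbabilityTheory.gaussianPDFReal m v z :=
      mul_nonneg (M_pos a δ b u r).le (ProbabilityTheory.gaussianPDFReal_nonneg m v z)
    calc M a δ b u r * |1 - M a δ b (T - u - t) z| * ProbabilityTheory.gaussianPDFReal m v z
        = (M a δ b u r * ProbabilityTheory.gaussianPDFReal m v z)
          * |1 - M a δ b (T - u - t) z| := by ring
      _ ≤ (M a δ b u r * ProbabilityTheory.gaussianPDFReal m v z) * 1 :=
          mul_le_mul_of_nonneg_left habs hMφ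
      _ = M a δ b u r * ProbabilityTheory.gaussianPDFReal m v z := by ring
  have hint2 : IntegrableOn (fun z => M a δ b u r * ProbabilityTheory.gaussianPDFReal m v z)
      (Set.Ioi α) := by
    exact ((ProbabilityTheory.integrable_gaussianPDFReal m v).const_mul _).integrableOn
  have hgcont : Continuous g := by
    apply ((continuous_const.mul ((continuous_const.sub (continuous_M_z a δ b _)))).mul
      (continuous_phi_z a δ b u r))
  have hint1 : IntegrableOn g (Set.Ioi α) := by
    apply hint2.mono' hgcont.aestronglyMeasurable.restrict
    exact (ae_restrict_iff' measurableSet_Ioi).mpr (ae_of_all _ hgb)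
  calc ‖∫ z in Set.Ioi α, g z‖ ≤ ∫ z in Set.Ioi α, ‖g z‖ := norm_integral_le_integral_norm _
    _ ≤ ∫ z in Set.Ioi α, M a δ b u r * ProbabilityTheory.gaussianPDFReal m v z := by
        apply setIntegral_mono_on hint1.norm hint2 measurableSet_Ioi hgb
    _ = M a δ b u r * ∫ z in Set.Ioi α, ProbabilityTheory.gaussianPDFReal m v z := by
        rw [MeasureTheory.integral_const_mul]
    _ ≤ M a δ b u r * ∫ z, ProbabilityTheory.gaussianPDFReal m v z := by
        apply mul_le_mul_of_nonneg_left _ (M_pos a δ b u r).le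
        apply setIntegral_le_integral (ProbabilityTheory.integrable_gaussianPDFReal m v)
        exact ae_of_all _ (fun z => ProbabilityTheory.gaussianPDFReal_nonneg m v z)
    _ = M a δ b u r := by
        rw [ProbabilityTheory.integral_gaussianPDFReal_eq_one m hv0, mul_one]

/-- The inner integrand is nonnegative on the domain. -/
lemma inner_nonneg (a δ b T t u r : ℝ) (ha : 0 < a) (hut : u + t ≤ T) :
    0 ≤ ∫ z in Set.Ioi (alphaCurve a δ b T (u + t)),
      M a δ b u r * (1 - M a δ b (T - u - t) z) * phiKer a δ b z u r := by
  apply setIntegral_nonneg measurableSet_Ioi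
  intro z hz
  have h1 : M a δ b (T - u - t) z ≤ 1 := by
    have := M_le_one a δ b T ha (s := u + t) (by linarith) (le_of_lt hz)
    rwa [show T - (u + t) = T - u - t by ring] at this
  exact mul_nonneg (mul_nonneg (M_pos a δ b u r).le (by linarith)) (phi_nonneg a δ b z u r)

lemma gammaFun_nonneg (a δ b T : ℝ) (ha : 0 < a) {t : ℝ} (ht : t ≤ T) (r : ℝ) :
    0 ≤ gammaFun a δ b T t r := by
  rw [gammaFun]
  apply intervalIntegral.integral_nonneg (by linarith)
  intro u hu
  exact inner_nonneg a δ b T t u r ha (by linarith [hu.2])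

lemma M_le_M_zero (a δ b : ℝ) (ha : 0 < a) {u r : ℝ} (hu : 0 ≤ u) (hr : 0 ≤ r) :
    M a δ b u r ≤ M a δ b u 0 := by
  rw [M, M, Real.exp_le_exp]
  have hc : 0 ≤ 1 - Real.exp (-(a*u)) := by
    rw [sub_nonneg]
    exact Real.exp_le_one_iff.mpr (by nlinarith)
  have h : ((b - δ^2/(2*a^2)) - r)/a * (1 - Real.exp (-(a*u)))
      ≤ ((b - δ^2/(2*a^2)) - 0)/a * (1 - Real.exp (-(a*u))) := by
    apply mul_le_mul_of_nonneg_right _ hc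
    gcongr
  linarith

lemma M_tendsto_zero (a δ b u : ℝ) (ha : 0 < a) (hu : 0 < u) :
    Tendsto (fun r => M a δ b u r) atTop (nhds 0) := by
  set B := b - δ^2/(2*a^2) with hB
  set c := 1 - Real.exp (-(a*u)) with hc
  have hcpos : 0 < c := by
    rw [hc, sub_pos]
    exact Real.exp_lt_one_iff.mpr (by nlinarith)
  have h1 : Tendsto (fun r : ℝ => (c/a)*r) atTop atTop :=
    Tendsto.const_mul_atTop (by positivity) tendsto_id
  have h2 : Tendsto (fun r : ℝ => (-B*u + B/a*c - δ^2/(4*a^3)*c^2) + -((c/a)*r))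
      atTop atBot :=
    tendsto_atBot_add_const_left _ _ (tendsto_neg_atTop_atBot.comp h1)
  have h3 := Real.tendsto_exp_atBot.comp h2
  refine h3.congr fun r => ?_
  rw [Function.comp_apply, M]
  congr 1
  ring

lemma M_tendsto_atTop (a δ b u : ℝ) (ha : 0 < a) (hu : 0 < u) :
    Tendsto (fun r => M a δ b u r) atBot atTop := by
  set B := b - δ^2/(2*a^2) with hB
  set c := 1 - Real.exp (-(a*u)) with hc
  have hcpos : 0 < c := by
    rw [hc, sub_pos]
    exact Real.exp_lt_one_iff.mpr (by nlinarith)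
  have h1 : Tendsto (fun r : ℝ => (c/a)*r) atBot atBot :=
    Tendsto.const_mul_atBot (by positivity) tendsto_id
  have h2 : Tendsto (fun r : ℝ => (-B*u + B/a*c - δ^2/(4*a^3)*c^2) + -((c/a)*r))
      atBot atTop :=
    tendsto_atTop_add_const_left _ _ (tendsto_neg_atBot_atTop.comp h1)
  have h3 := Real.tendsto_exp_atTop.comp h2
  refine h3.congr fun r => ?_
  rw [Function.comp_apply, M]
  congr 1
  ring

/-- (i) `γ(t,r) ≥ 0` on `[0,T) × ℝ`;
(ii) for every `t ∈ [0,T)`, `lim_{r→∞} G̃(t,r) = 0` and `lim_{r→−∞} G̃(t,r) = ∞`;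
(iii) for every `r`, `lim_{t→T⁻} G̃(t,r) = 0`. -/
theorem Gtilde_boundary (a δ b T μ ξ : ℝ) (ha : 0 < a) (hδ : 0 < δ) (hT : 0 < T)
    (hμ : 0 < μ) (hξ : 0 < ξ) :
    (∀ t : ℝ, 0 ≤ t → t < T → ∀ r : ℝ, 0 ≤ gammaFun a δ b T t r) ∧
    (∀ t : ℝ, 0 ≤ t → t < T →
      Tendsto (fun r => Gtilde a δ b T μ ξ t r) atTop (nhds 0) ∧
      Tendsto (fun r => Gtilde a δ b T μ ξ t r) atBot atTop) ∧
    (∀ r : ℝ, Tendsto (fun t => Gtilde a δ b T μ ξ t r)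
      (nhdsWithin T (Set.Iio T)) (nhds 0)) := by
  refine ⟨fun t ht htT r => gammaFun_nonneg a δ b T ha (le_of_lt htT) r, ?_, ?_⟩
  · intro t ht htT
    have hX : 0 < T - t := by linarith
    constructor
    · -- limit as r → ∞
      have h1 : Tendsto (fun r => μ*(T - t)*M a δ b (T - t) r) atTop (nhds 0) := by
        have := (M_tendsto_zero a δ b (T - t) ha hX).const_mul (μ*(T - t))
        rw [mul_zero] at this
        simpa [mul_assoc] using this
      have hH : Tendsto (fun r => ∫ u in (0:ℝ)..(T - t), M a δ b u r) atTop (nhds 0) := by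
        have := intervalIntegral.tendsto_integral_filter_of_dominated_convergence
          (μ := volume) (a := (0:ℝ)) (b := T - t) (l := atTop)
          (F := fun r u => M a δ b u r) (f := fun _ => (0:ℝ))
          (fun u => M a δ b u 0)
          (Eventually.of_forall fun r =>
            (continuous_M_u a δ b r).aestronglyMeasurable.restrict)
          ?_ ((continuous_M_u a δ b 0).intervalIntegrable 0 (T - t)) ?_
        · simpa using this
        · filter_upwards [eventually_ge_atTop (0:ℝ)] with r hr
          apply ae_of_all
          intro u hu
          rw [Set.uIoc_of_le hX.le] at hu
          rw [Real.norm_eq_abs, abs_of_pos (M_pos a δ b u r)]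
          exact M_le_M_zero a δ b ha hu.1.le hr
        · apply ae_of_all
          intro u hu
          rw [Set.uIoc_of_le hX.le] at hu
          exact M_tendsto_zero a δ b u ha hu.1
      have h2 : Tendsto (fun r => gammaFun a δ b T t r) atTop (nhds 0) := by
        apply squeeze_zero_norm (a := fun r => |∫ u in (0:ℝ)..(T - t), M a δ b u r|)
        · intro r
          rw [gammaFun]
          apply intervalIntegral.norm_integral_le_abs_of_norm_le
            (g := fun u => M a δ b u r)
          · refine (ae_restrict_iff' measurableSet_uIoc).mpr (ae_of_all _ ?_)
            intro u hu
            rw [Set.uIoc_of_le hX.le] at hu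
            exact inner_bound a δ b T t u r ha hδ hu.1 (by linarith [hu.2])
          · exact (continuous_M_u a δ b r).intervalIntegrable 0 (T - t)
        · simpa using hH.abs
      have h3 := h1.add (h2.const_mul ξ)
      rw [mul_zero, add_zero] at h3
      exact h3.congr fun r => by rw [Gtilde]
    · -- limit as r → −∞
      have h1 : Tendsto (fun r => μ*(T - t)*M a δ b (T - t) r) atBot atTop := by
        have := Tendsto.const_mul_atTop (show 0 < μ*(T - t) by positivity)
          (M_tendsto_atTop a δ b (T - t) ha hX)
        simpa [mul_assoc] using this
      apply tendsto_atTop_mono _ h1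
      intro r
      rw [Gtilde]
      have := gammaFun_nonneg a δ b T ha (le_of_lt htT) r
      nlinarith
  · intro r
    have h1 : Tendsto (fun t => μ*(T - t)*M a δ b (T - t) r)
        (nhdsWithin T (Set.Iio T)) (nhds 0) := by
      have hcont : Continuous (fun t => μ*(T - t)*M a δ b (T - t) r) :=
        (continuous_const.mul (continuous_const.sub continuous_id)).mul
          ((continuous_M_u a δ b r).comp (continuous_const.sub continuous_id))
      have h := (hcont.tendsto T).mono_left
        (nhdsWithin_le_nhds (s := Set.Iio T))
      simpa using h
    obtain ⟨C, hC⟩ := (isCompact_Icc (a := (0:ℝ)) (b := T)).exists_bound_of_continuousOn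
      (continuous_M_u a δ b r).continuousOn
    have hC0 : 0 ≤ C := le_trans (norm_nonneg _) (hC 0 ⟨le_refl 0, hT.le⟩)
    have hbound : ∀ t ∈ Set.Ioo 0 T, ‖gammaFun a δ b T t r‖ ≤ C * (T - t) := by
      intro t ht
      have hX : 0 < T - t := by linarith [ht.2]
      rw [gammaFun]
      have := intervalIntegral.norm_integral_le_of_norm_le_const (C := C)
        (a := (0:ℝ)) (b := T - t)
        (f := fun u => ∫ z in Set.Ioi (alphaCurve a δ b T (u + t)),
          M a δ b u r * (1 - M a δ b (T - u - t) z) * phiKer a δ b z u r) ?_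
      · rwa [sub_zero, abs_of_pos hX] at this
      · intro u hu
        rw [Set.uIoc_of_le hX.le] at hu
        calc ‖∫ z in Set.Ioi (alphaCurve a δ b T (u + t)),
              M a δ b u r * (1 - M a δ b (T - u - t) z) * phiKer a δ b z u r‖
            ≤ M a δ b u r := inner_bound a δ b T t u r ha hδ hu.1 (by linarith [hu.2])
          _ ≤ ‖M a δ b u r‖ := le_abs_self _
          _ ≤ C := hC u ⟨hu.1.le, by linarith [hu.2, ht.1]⟩
    have h2 : Tendsto (fun t => ξ * gammaFun a δ b T t r)
        (nhdsWithin T (Set.Iio T)) (nhds 0) := by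
      apply squeeze_zero_norm' (a := fun t => ξ * (C * (T - t)))
      · filter_upwards [Ioo_mem_nhdsLT_of_mem (Set.mem_Ioc.mpr ⟨hT, le_refl T⟩)]
          with t ht
        rw [norm_mul, Real.norm_eq_abs (ξ), abs_of_pos hξ]
        exact mul_le_mul_of_nonneg_left (hbound t ht) hξ.le
      · have hcont : Continuous (fun t : ℝ => ξ * (C * (T - t))) :=
          continuous_const.mul (continuous_const.mul
            (continuous_const.sub continuous_id))
        have h := (hcont.tendsto T).mono_left
          (nhdsWithin_le_nhds (s := Set.Iio T))
        simpa using h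
    have h3 := h1.add h2
    rw [add_zero] at h3
    exact h3.congr fun t => by rw [Gtilde]
end

section
/- For every s ≥ 0 and r ∈ ℝ, the function M admits the absolutely convergent power series representation M(s,r) = e^{(b̃ − r − δ²/(4a²))/a} · Σ_{n=0}^{∞} e^{−(an+b̃)s} · Σ_{k=0}^{⌊n/2⌋} ((−1)^{n−k} / (k!·(n−2k)!)) · ((b̃ − r − δ²/(2a²))/a)^{n−2k} · (δ²/(4a³))^{k}. -/
open Real


open Finset in
lemma cauchy_aux (p d x : ℝ) :
    Summable (fun n => |∑ k ∈ range (n/2+1),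
        ((-1:ℝ)^(n-k) / ((Nat.factorial k : ℝ) * (Nat.factorial (n-2*k) : ℝ))) *
          p^(n-2*k) * d^k * x^n|) ∧
    Real.exp (-(p*x) + -(d*x^2))
      = ∑' n : ℕ, ∑ k ∈ range (n/2+1),
        ((-1:ℝ)^(n-k) / ((Nat.factorial k : ℝ) * (Nat.factorial (n-2*k) : ℝ))) *
          p^(n-2*k) * d^k * x^n := by
  set A : ℕ → ℝ := fun m => (-(p*x))^m / m.factorial with hA
  set B : ℕ → ℝ := fun j => if 2 ∣ j then (-(d*x^2))^(j/2) / (j/2).factorial else 0 with hB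
  have hAnorm : Summable fun m => ‖A m‖ := by
    have h := Real.summable_pow_div_factorial |(-(p*x))|
    apply h.congr
    intro m
    simp [hA, abs_div, abs_pow, abs_mul]
  have hinj : Function.Injective (fun k : ℕ => 2*k) := fun a b h => by
    simpa using h
  have hBz : ∀ j ∉ Set.range (fun k : ℕ => 2*k), B j = 0 := by
    intro j hj
    simp only [Set.mem_range] at hj
    have h2 : ¬ 2 ∣ j := by
      rintro ⟨k, rfl⟩; exact hj ⟨k, rfl⟩
    simp [hB, h2]
  have hB2 : ∀ k, B (2*k) = (-(d*x^2))^k / k.factorial := by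
    intro k
    simp only [hB]
    rw [if_pos (dvd_mul_right 2 k), Nat.mul_div_cancel_left k (by norm_num)]
  have hBnorm : Summable fun j => ‖B j‖ := by
    rw [← hinj.summable_iff (f := fun j => ‖B j‖) (fun j hj => by simp [hBz j hj])]
    have h := Real.summable_pow_div_factorial |(-(d*x^2))|
    apply h.congr
    intro k
    simp [Function.comp_def, hB2 k, abs_div, abs_pow]
  have hAsum : HasSum A (Real.exp (-(p*x))) := by
    rw [Real.exp_eq_exp_ℝ]
    exact NormedSpace.expSeries_div_hasSum_exp _
  have hBsum : HasSum B (Real.exp (-(d*x^2))) := by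
    rw [← hinj.hasSum_iff hBz]
    have h : HasSum (fun k : ℕ => (-(d*x^2))^k / k.factorial) (Real.exp (-(d*x^2))) := by
      rw [Real.exp_eq_exp_ℝ]
      exact NormedSpace.expSeries_div_hasSum_exp _
    simpa [Function.comp_def, hB2] using h
  have hkey : ∀ n, ∑ j ∈ range (n+1), B j * A (n-j)
      = ∑ k ∈ range (n/2+1),
        ((-1:ℝ)^(n-k) / ((Nat.factorial k : ℝ) * (Nat.factorial (n-2*k) : ℝ))) *
          p^(n-2*k) * d^k * x^n := by
    intro n
    have himg : (range (n/2+1)).image (fun k => 2*k) ⊆ range (n+1) := by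
      intro j hj
      simp only [mem_image, mem_range] at hj ⊢
      obtain ⟨k, hk, rfl⟩ := hj
      omega
    rw [show ∑ j ∈ range (n+1), B j * A (n-j)
        = ∑ j ∈ (range (n/2+1)).image (fun k => 2*k), B j * A (n-j) from
      (Finset.sum_subset himg (by
        intro j hj hj'
        have h2 : ¬ 2 ∣ j := by
          rintro ⟨k, rfl⟩
          simp only [mem_image, mem_range] at hj hj'
          exact hj' ⟨k, by omega, rfl⟩
        simp [hB, h2])).symm]
    rw [Finset.sum_image (by intro a _ b _ h; simp only at h; omega)]
    apply Finset.sum_congr rfl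
    intro k hk
    simp only [mem_range] at hk
    have h2k : 2*k ≤ n := by omega
    rw [hB2 k]
    simp only [hA]
    have h1 : x ^ (2*k) * x ^ (n - 2*k) = x ^ n := by
      rw [← pow_add]; congr 1; omega
    have h2 : (-1:ℝ)^k * (-1:ℝ)^(n-2*k) = (-1:ℝ)^(n-k) := by
      rw [← pow_add]; congr 1; omega
    have e1 : (-(d*x^2))^k = (-1:ℝ)^k * (d^k * x^(2*k)) := by
      rw [neg_pow, mul_pow, ← pow_mul]
    have e2 : (-(p*x))^(n-2*k) = (-1:ℝ)^(n-2*k) * (p^(n-2*k) * x^(n-2*k)) := by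
      rw [neg_pow, mul_pow]
    rw [e1, e2, div_mul_div_comm,
      show (-1:ℝ)^k * (d^k*x^(2*k)) * ((-1:ℝ)^(n-2*k) * (p^(n-2*k)*x^(n-2*k)))
        = ((-1:ℝ)^k*(-1:ℝ)^(n-2*k)) * (p^(n-2*k) * d^k * (x^(2*k)*x^(n-2*k))) from by ring,
      h2, h1]
    ring
  constructor
  · have h := summable_norm_sum_mul_range_of_summable_norm hBnorm hAnorm
    apply h.congr
    intro n
    rw [Real.norm_eq_abs, hkey n]
  · rw [Real.exp_add, mul_comm, ← hBsum.tsum_eq, ← hAsum.tsum_eq,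
      tsum_mul_tsum_eq_tsum_sum_range_of_summable_norm hBnorm hAnorm]
    exact tsum_congr hkey

/-- The `n`-th term of the power series expansion of `M(s,r)`:
`e^{−(an+b̃)s} · Σ_{k=0}^{⌊n/2⌋} ((−1)^{n−k}/(k!(n−2k)!)) ((b̃−r−δ²/(2a²))/a)^{n−2k} (δ²/(4a³))^k`. -/
noncomputable def Mseries (a δ b s r : ℝ) (n : ℕ) : ℝ :=
  Real.exp (-(a*n + (b - δ^2/(2*a^2)))*s) *
    ∑ k ∈ Finset.range (n/2 + 1),
      ((-1:ℝ)^(n - k) / ((Nat.factorial k : ℝ) * (Nat.factorial (n - 2*k) : ℝ))) *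
        (((b - δ^2/(2*a^2)) - r - δ^2/(2*a^2))/a)^(n - 2*k) * (δ^2/(4*a^3))^k

/-- for every `s ≥ 0` and `r ∈ ℝ`, `M` admits the absolutely
convergent power series representation
`M(s,r) = e^{(b̃−r−δ²/(4a²))/a} · Σ_{n=0}^∞ Mseries n`. -/
theorem M_power_series (a δ b : ℝ) (ha : 0 < a) (hδ : 0 < δ) :
    ∀ s ≥ (0:ℝ), ∀ r : ℝ,
      Summable (fun n => |Mseries a δ b s r n|) ∧
      M a δ b s r
        = Real.exp (((b - δ^2/(2*a^2)) - r - δ^2/(4*a^2))/a) *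
            ∑' n : ℕ, Mseries a δ b s r n := by
  intro s hs r
  have ha' : a ≠ 0 := ne_of_gt ha
  obtain ⟨hsum, heq⟩ := cauchy_aux (((b - δ^2/(2*a^2)) - r - δ^2/(2*a^2))/a)
    (δ^2/(4*a^3)) (Real.exp (-(a*s)))
  have hMs : ∀ n : ℕ, Mseries a δ b s r n
      = Real.exp (-((b - δ^2/(2*a^2))*s)) *
        ∑ k ∈ Finset.range (n/2 + 1),
          ((-1:ℝ)^(n - k) / ((Nat.factorial k : ℝ) * (Nat.factorial (n - 2*k) : ℝ))) *
            (((b - δ^2/(2*a^2)) - r - δ^2/(2*a^2))/a)^(n - 2*k) * (δ^2/(4*a^3))^k *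
            (Real.exp (-(a*s)))^n := by
    intro n
    rw [Mseries, ← Finset.sum_mul]
    have hx : Real.exp (-(a*(n:ℝ) + (b - δ^2/(2*a^2)))*s)
        = Real.exp (-((b - δ^2/(2*a^2))*s)) * Real.exp (-(a*s))^n := by
      rw [← Real.exp_nat_mul, ← Real.exp_add]
      congr 1
      ring
    rw [hx]
    ring
  constructor
  · apply (hsum.mul_left (Real.exp (-((b - δ^2/(2*a^2))*s)))).congr
    intro n
    rw [hMs n, abs_mul, abs_of_pos (Real.exp_pos _)]
  · rw [tsum_congr hMs, tsum_mul_left, ← heq, M, ← Real.exp_add, ← Real.exp_add]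
    congr 1
    field_simp
    ring
end
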